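/- arXiv:1710.09755 — 3 statements merged into one kernel-verified Lean document; each statement's English description precedes it below -/
import Mathlib

section
/- Let D be a square-free positive integer with D ≡ 1 (mod 4) or D ≡ 2 (mod 4), and let n > 1 be an odd integer such that n·a^(n−1) ≢ 1 (mod D) and n·a^(n−1) ≢ −1 (mod D) for every integer a. If n is coprime to the class number h of the imaginary quadratic field ℚ(√−D), then the Diophantine equation x² + D = yⁿ has no integer solutions (x, y). -/
open IntermediateField NumberField Polynomial
open scoped nonZeroDivisors
open Zsqrtd

noncomputable def th (D : ℕ) : ℂ := Complex.I * Real.sqrt D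

lemma th_mul_self (D : ℕ) : th D * th D = -(D:ℂ) := by
  unfold th
  have : (Real.sqrt D : ℂ) * (Real.sqrt D : ℂ) = (D:ℂ) := by
    rw [← Complex.ofReal_mul, Real.mul_self_sqrt (Nat.cast_nonneg D)]
    push_cast; ring
  rw [mul_mul_mul_comm, Complex.I_mul_I, this]; ring

lemma th_im (D : ℕ) : (th D).im = Real.sqrt D := by
  simp [th, Complex.mul_im]

lemma th_integralZ (D : ℕ) : IsIntegral ℤ (th D) := by
  refine ⟨X ^ 2 + C (D:ℤ), monic_X_pow_add_C _ two_ne_zero, ?_⟩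
  simp [sq, th_mul_self D]

lemma th_integralQ (D : ℕ) : IsIntegral ℚ (th D) := by
  refine ⟨X ^ 2 + C (D:ℚ), monic_X_pow_add_C _ two_ne_zero, ?_⟩
  simp [sq, th_mul_self D]

lemma th_not_rat (D : ℕ) (hDpos : 0 < D) : th D ∉ (algebraMap ℚ ℂ).range := by
  rintro ⟨q, hq⟩
  have : (th D).im = 0 := by rw [← hq]; simp
  rw [th_im] at this
  exact absurd this (ne_of_gt (Real.sqrt_pos.mpr (by exact_mod_cast hDpos)))

lemma minpoly_th_natDegree (D : ℕ) (hDpos : 0 < D) :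
    (minpoly ℚ (th D)).natDegree = 2 := by
  have h1 : (minpoly ℚ (th D)).natDegree ≤ 2 := by
    have hdvd : minpoly ℚ (th D) ∣ X ^ 2 + C (D:ℚ) :=
      minpoly.dvd _ _ (by simp [sq, th_mul_self D])
    calc (minpoly ℚ (th D)).natDegree ≤ (X ^ 2 + C (D:ℚ)).natDegree :=
          natDegree_le_of_dvd hdvd ((monic_X_pow_add_C _ two_ne_zero).ne_zero)
      _ = 2 := by
          rw [natDegree_X_pow_add_C]
  have h2 : 2 ≤ (minpoly ℚ (th D)).natDegree :=
    (minpoly.two_le_natDegree_iff (th_integralQ D)).mpr (th_not_rat D hDpos)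
  omega

lemma coords (D : ℕ) {z : ℂ} (hz : z ∈ ℚ⟮th D⟯) : ∃ p q : ℚ, z = p + q * th D := by
  have h1 := IntermediateField.adjoin_simple_toSubalgebra_of_isAlgebraic (th_integralQ D).isAlgebraic
  have hz' : z ∈ Algebra.adjoin ℚ ({th D} : Set ℂ) := by
    rw [← h1]; exact hz
  rw [Algebra.adjoin_singleton_eq_range_aeval, AlgHom.mem_range] at hz'
  obtain ⟨P, hP⟩ := hz'
  set g : ℚ[X] := X ^ 2 + C (D:ℚ) with hg
  have hgm : g.Monic := monic_X_pow_add_C _ two_ne_zero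
  have hzero : aeval (th D) g = 0 := by simp [hg, sq, th_mul_self D]
  set R := P %ₘ g with hR
  have hPR : aeval (th D) P = aeval (th D) R := by
    conv_lhs => rw [← modByMonic_add_div P g]
    simp [hzero, hR]
  have hdeg : R.natDegree ≤ 1 := by
    have := degree_modByMonic_lt P hgm
    have hgdeg : g.degree = 2 := by
      rw [hg]; compute_degree!
    rw [hgdeg] at this
    exact natDegree_le_iff_degree_le.mpr (Order.le_of_lt_succ (by exact_mod_cast this))
  refine ⟨R.coeff 0, R.coeff 1, ?_⟩
  rw [← hP, hPR]
  conv_lhs => rw [eq_X_add_C_of_natDegree_le_one hdeg]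
  simp only [map_add, map_mul, aeval_X, aeval_C]
  rw [show ∀ q : ℚ, algebraMap ℚ ℂ q = (q:ℂ) from fun q => rfl,
    show ∀ q : ℚ, algebraMap ℚ ℂ q = (q:ℂ) from fun q => rfl]
  ring

lemma den_lemma (D : ℕ) (hD : Squarefree D) (t : ℚ) (k : ℤ)
    (h : (D:ℚ) * t^2 = (k:ℚ)) : ∃ s : ℤ, (s:ℚ) = t := by
  refine ⟨t.num, ?_⟩
  suffices hden : t.den = 1 by
    conv_rhs => rw [← Rat.num_div_den t]
    rw [hden]; simp
  have hd0 : (t.den : ℚ) ≠ 0 := Nat.cast_ne_zero.mpr t.den_nz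
  have key : (D:ℤ) * t.num ^ 2 = k * (t.den:ℤ) ^ 2 := by
    have : (D:ℚ) * ((t.num:ℚ)/(t.den:ℚ))^2 = (k:ℚ) := by rw [Rat.num_div_den t]; exact h
    field_simp at this
    rw [mul_comm k]
    exact_mod_cast this
  have hdvd : (t.den:ℤ)^2 ∣ (D:ℤ) * t.num ^ 2 := ⟨k, by linarith [key]⟩
  have hdvdn : t.den^2 ∣ D * t.num.natAbs ^ 2 := by
    have := Int.natAbs_dvd_natAbs.mpr hdvd
    simpa [Int.natAbs_mul, Int.natAbs_pow] using this
  have hcop : (t.den^2).Coprime (t.num.natAbs ^ 2) :=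
    Nat.Coprime.pow 2 2 (Nat.coprime_comm.mp t.reduced)
  have hdvdD : t.den ^ 2 ∣ D := hcop.dvd_of_dvd_mul_right hdvdn
  have := hD t.den (by rwa [← sq])
  simpa using this

lemma int_coords (D : ℕ) (hD : Squarefree D) (hDmod : D % 4 = 1 ∨ D % 4 = 2) {z : ℂ}
    (hz : z ∈ ℚ⟮th D⟯) (hint : IsIntegral ℤ z) : ∃ a b : ℤ, z = a + b * th D := by
  obtain ⟨p, q, hpq⟩ := coords D hz
  -- conjugate
  have hconj : (starRingEnd ℂ) z = p - q * th D := by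
    rw [hpq]
    simp [th, map_add, map_mul, Complex.conj_I, Complex.conj_ofReal]
    ring
  have hconjint : IsIntegral ℤ ((starRingEnd ℂ) z) :=
    hint.map ((starRingEnd ℂ).toIntAlgHom)
  -- trace
  have htr : z + (starRingEnd ℂ) z = ((2*p : ℚ) : ℂ) := by
    rw [hconj, hpq]; push_cast; ring
  have htrint : IsIntegral ℤ ((2*p:ℚ):ℂ) := htr ▸ hint.add hconjint
  have h2p : ∃ r : ℤ, (r:ℚ) = 2*p := by
    have : IsIntegral ℤ (2*p : ℚ) := by
      rwa [show ((2*p:ℚ):ℂ) = algebraMap ℚ ℂ (2*p) from rfl,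
        isIntegral_algebraMap_iff (algebraMap ℚ ℂ).injective] at htrint
    obtain ⟨r, hr⟩ := IsIntegrallyClosed.isIntegral_iff.mp this
    exact ⟨r, hr⟩
  -- norm
  have hnrm : z * (starRingEnd ℂ) z = ((p^2 + D * q^2 : ℚ) : ℂ) := by
    rw [hconj, hpq]
    have : ((p:ℂ) + q * th D) * (p - q * th D) = p^2 - q^2 * (th D * th D) := by ring
    rw [this, th_mul_self D]; push_cast; ring
  have hnrmint : IsIntegral ℤ ((p^2 + D*q^2 : ℚ):ℂ) := hnrm ▸ hint.mul hconjint
  have hm : ∃ m : ℤ, (m:ℚ) = p^2 + D*q^2 := by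
    have : IsIntegral ℤ (p^2 + D*q^2 : ℚ) := by
      rwa [show ((p^2 + D*q^2:ℚ):ℂ) = algebraMap ℚ ℂ (p^2+D*q^2) from rfl,
        isIntegral_algebraMap_iff (algebraMap ℚ ℂ).injective] at hnrmint
    obtain ⟨m, hm⟩ := IsIntegrallyClosed.isIntegral_iff.mp this
    exact ⟨m, hm⟩
  obtain ⟨r, hr⟩ := h2p
  obtain ⟨m, hm⟩ := hm
  -- 2q is an integer
  have h2q : ∃ s : ℤ, (s:ℚ) = 2*q := by
    apply den_lemma D hD (2*q) (4*m - r^2)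
    push_cast
    rw [hr, hm]; ring
  obtain ⟨s, hs⟩ := h2q
  -- the key integer relation
  have hkey : r^2 + (D:ℤ) * s^2 = 4*m := by
    have h : ((r:ℚ))^2 + (D:ℚ) * (s:ℚ)^2 = 4*(m:ℚ) := by
      rw [hr, hs]; linear_combination (-4:ℚ) * hm
    exact_mod_cast h
  -- parity: r and s are even
  have hre : (2:ℤ) ∣ r ∧ (2:ℤ) ∣ s := by
    have h4 : ((r:ZMod 4))^2 + (D:ZMod 4)*((s:ZMod 4))^2 = 0 := by
      have h := congrArg (fun t : ℤ => (t : ZMod 4)) hkey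
      push_cast at h
      rw [h, show ((4:ZMod 4)) = 0 from by decide, zero_mul]
    have hD4 : (D : ZMod 4) = 1 ∨ (D : ZMod 4) = 2 := by
      rcases hDmod with h | h
      · left; rw [← ZMod.natCast_mod D 4, h]; decide
      · right; rw [← ZMod.natCast_mod D 4, h]; decide
    have key : ∀ u v : ZMod 4, (u^2 + v^2 = 0 ∨ u^2 + 2*v^2 = 0) →
        ((u = 0 ∨ u = 2) ∧ (v = 0 ∨ v = 2)) := by decide
    have hk := key (r : ZMod 4) (s : ZMod 4) (by
      rcases hD4 with h | h
      · left; rw [← h4, h]; try ring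
      · right; rw [← h4, h]; try ring)
    have conv2 : ∀ t : ℤ, ((t : ZMod 4) = 0 ∨ (t : ZMod 4) = 2) → (2:ℤ) ∣ t := by
      intro t ht
      have hmap : (ZMod.castHom (show (2:ℕ) ∣ 4 by norm_num) (ZMod 2)) ((t : ZMod 4))
          = ((t : ZMod 2)) := map_intCast _ t
      have ht2 : (t : ZMod 2) = 0 := by
        rcases ht with h | h <;> rw [← hmap, h] <;> (try decide)
      have := (ZMod.intCast_zmod_eq_zero_iff_dvd t 2).mp ht2
      exact_mod_cast this
    exact ⟨conv2 r hk.1, conv2 s hk.2⟩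
  obtain ⟨⟨a, ha⟩, ⟨b, hb⟩⟩ := hre
  refine ⟨a, b, ?_⟩
  have hp : (p:ℂ) = (a:ℂ) := by
    have : (2:ℚ) * p = ((2*a : ℤ):ℚ) := by rw [← hr, ha]
    have : p = (a:ℚ) := by push_cast at this; linarith
    rw [this]; norm_cast
  have hq : (q:ℂ) = (b:ℂ) := by
    have : (2:ℚ) * q = ((2*b : ℤ):ℚ) := by rw [← hs, hb]
    have : q = (b:ℚ) := by push_cast at this; linarith
    rw [this]; norm_cast
  rw [hpq, hp, hq]

lemma zsq_pow (D : ℕ) (a b : ℤ) : ∀ k : ℕ, ∃ e f : ℤ,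
    ((⟨a,b⟩ : ℤ√(-(D:ℤ)))^k) = ⟨a^k + D*e, k*a^(k-1)*b + D*b*f⟩ := by
  intro k
  induction k with
  | zero => exact ⟨0, 0, by ext <;> simp⟩
  | succ k ih =>
    obtain ⟨e, f, hef⟩ := ih
    refine ⟨e*a - k*a^(k-1)*b^2 - D*f*b^2, e + f*a, ?_⟩
    have hka : (k:ℤ) * a^(k-1) * a = k * a^k := by
      cases k with
      | zero => simp
      | succ k => push_cast; rw [mul_assoc, ← pow_succ]
    rw [pow_succ, hef]
    ext
    · show _ = a^(k+1) + (D:ℤ)*(e*a - k*a^(k-1)*b^2 - D*f*b^2)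
      rw [Zsqrtd.re_mul]
      show (a^k + D*e) * a + (-(D:ℤ)) * (k*a^(k-1)*b + D*b*f) * b = _
      have hpow : a^k * a = a^(k+1) := (pow_succ a k).symm
      linear_combination hpow
    · show _ = ((k:ℤ)+1)*a^(k+1-1)*b + D*b*(e + f*a)
      rw [Zsqrtd.im_mul]
      show (a^k + D*e) * b + (k*a^(k-1)*b + D*b*f) * a = _
      rw [Nat.add_sub_cancel]
      linear_combination b * hka

set_option maxHeartbeats 1000000 in
set_option synthInstance.maxHeartbeats 400000 in
theorem stmt0 (D : ℕ) (hD : Squarefree D) (hDpos : 0 < D)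
    (hDmod : D % 4 = 1 ∨ D % 4 = 2)
    (n : ℕ) (hn : 1 < n) (hodd : Odd n)
    (ha : ∀ a : ℤ, ¬ ((n : ℤ) * a ^ (n - 1) ≡ 1 [ZMOD (D : ℤ)]) ∧
      ¬ ((n : ℤ) * a ^ (n - 1) ≡ -1 [ZMOD (D : ℤ)]))
    (hcop : Nat.Coprime n
      (Nat.card (ClassGroup (𝓞 ℚ⟮(Complex.I * Real.sqrt D : ℂ)⟯)))) :
    ¬ ∃ x y : ℤ, x ^ 2 + (D : ℤ) = y ^ n := by
  rintro ⟨x, y, hxy⟩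
  have hcop' : Nat.Coprime n (Nat.card (ClassGroup (𝓞 ℚ⟮th D⟯))) := hcop
  -- D ≥ 2
  have hD1 : D ≠ 1 := by
    intro h
    refine (ha 0).1 ?_
    rw [h]
    exact Int.modEq_one
  have hD2 : 2 ≤ D := by omega
  have hn2 : 2 ≤ n := hn
  -- y is odd
  have hy2 : ¬ (2:ℤ) ∣ y := by
    rintro ⟨c, hc⟩
    have h4 : (4:ℤ) ∣ y ^ n := by
      have : y^n = y^2 * y^(n-2) := by rw [← pow_add]; congr 1; omega
      rw [this, hc]
      exact ⟨c^2 * (2*c)^(n-2), by ring⟩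
    obtain ⟨k, hk⟩ := h4
    have hz4 : ((x : ZMod 4))^2 + (D : ZMod 4) = 0 := by
      have h := congrArg (fun t : ℤ => (t : ZMod 4)) (hxy.trans hk)
      push_cast at h
      rw [h, show ((4:ZMod 4)) = 0 from by decide, zero_mul]
    have hD4 : (D : ZMod 4) = 1 ∨ (D : ZMod 4) = 2 := by
      rcases hDmod with h | h
      · left; rw [← ZMod.natCast_mod D 4, h]; decide
      · right; rw [← ZMod.natCast_mod D 4, h]; decide
    have key : ∀ u : ZMod 4, u^2 + 1 ≠ 0 ∧ u^2 + 2 ≠ 0 := by decide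
    rcases hD4 with h | h
    · exact (key (x:ZMod 4)).1 (by rw [← hz4, h])
    · exact (key (x:ZMod 4)).2 (by rw [← hz4, h])
  -- y is coprime to D
  have hyD : IsCoprime (y:ℤ) (D:ℤ) := by
    rw [Int.isCoprime_iff_gcd_eq_one]
    by_contra hg
    obtain ⟨p, hp, hpdvd⟩ := Nat.exists_prime_and_dvd hg
    have hpy : (p:ℤ) ∣ y := dvd_trans (Int.natCast_dvd_natCast.mpr hpdvd) (Int.gcd_dvd_left _ _)
    have hpD : (p:ℤ) ∣ (D:ℤ) := dvd_trans (Int.natCast_dvd_natCast.mpr hpdvd) (Int.gcd_dvd_right _ _)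
    have hpZ : Prime (p:ℤ) := Int.prime_iff_natAbs_prime.mpr (by simpa using hp)
    have hpx : (p:ℤ) ∣ x := by
      refine hpZ.dvd_of_dvd_pow (n := 2) ?_
      have : x^2 = y^n - D := by linarith
      rw [this]
      exact dvd_sub (dvd_pow hpy (by omega)) hpD
    have hp2D : (p:ℤ)*(p:ℤ) ∣ (D:ℤ) := by
      have h1 : (p:ℤ)*(p:ℤ) ∣ y^n := by
        have : y^n = y^2 * y^(n-2) := by rw [← pow_add]; congr 1; omega
        rw [this]
        exact Dvd.dvd.mul_right (by rw [sq]; exact mul_dvd_mul hpy hpy) _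
      have h2 : (p:ℤ)*(p:ℤ) ∣ x^2 := by rw [sq]; exact mul_dvd_mul hpx hpx
      have : (D:ℤ) = y^n - x^2 := by linarith
      rw [this]
      exact dvd_sub h1 h2
    exact hpZ.not_unit (Int.squarefree_natCast.mpr hD _ hp2D)
  have hy4D : IsCoprime (y:ℤ) (4*(D:ℤ)) := by
    have hy2' : IsCoprime (y:ℤ) 2 := by
      rw [Int.isCoprime_iff_gcd_eq_one]
      have h1 : Int.gcd y 2 ∣ 2 := by
        have := Int.gcd_dvd_right (a := y) (b := 2)
        exact_mod_cast this
      rcases (Nat.dvd_prime Nat.prime_two).mp h1 with h | h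
      · exact h
      · exfalso
        apply hy2
        have := Int.gcd_dvd_left (a := y) (b := 2)
        rw [h] at this
        exact_mod_cast this
    have : IsCoprime (y:ℤ) 4 := by
      have := hy2'.mul_right hy2'
      norm_num at this
      exact this
    exact this.mul_right hyD
  -- setting up the number field
  haveI hfd : FiniteDimensional ℚ ℚ⟮th D⟯ :=
    IntermediateField.adjoin.finiteDimensional (th_integralQ D)
  haveI : NumberField ℚ⟮th D⟯ := ⟨⟩
  set K := ℚ⟮th D⟯ with hK
  set R := 𝓞 K with hR
  have hθmem : th D ∈ K := IntermediateField.mem_adjoin_simple_self ℚ (th D)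
  set θK : K := ⟨th D, hθmem⟩ with hθK
  have hθint : IsIntegral ℤ θK := by
    rw [← isIntegral_algebraMap_iff (algebraMap K ℂ).injective]
    exact th_integralZ D
  set θR : R := ⟨θK, hθint⟩ with hθR
  set j : R →+* ℂ := (algebraMap K ℂ).comp (algebraMap R K) with hj
  have hjinj : Function.Injective j :=
    (algebraMap K ℂ).injective.comp NumberField.RingOfIntegers.coe_injective
  have hjθ : j θR = th D := rfl
  have hjint : ∀ t : ℤ, j ((t:ℤ) : R) = (t : ℂ) := fun t => map_intCast j t
  -- the factorization in R
  have hxyC : (x:ℂ)^2 + (D:ℂ) = (y:ℂ)^n := by exact_mod_cast congrArg (Int.cast : ℤ → ℂ) hxy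
  have hynR : (((x:ℤ):R) + θR) * (((x:ℤ):R) - θR) = ((y:ℤ):R)^n := by
    apply hjinj
    simp only [map_mul, map_add, map_sub, map_pow, hjθ, hjint]
    linear_combination hxyC - th_mul_self D
  set ξp : R := ((x:ℤ):R) + θR with hξp
  set ξm : R := ((x:ℤ):R) - θR with hξm
  set Ip : Ideal R := Ideal.span {ξp} with hIp
  set Im : Ideal R := Ideal.span {ξm} with hIm
  have hprod : Ip * Im = (Ideal.span {((y:ℤ):R)})^n := by
    rw [hIp, hIm, Ideal.span_singleton_mul_span_singleton, Ideal.span_singleton_pow, hynR]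
  have hsup : Ip ⊔ Im = ⊤ := by
    by_contra hne
    obtain ⟨P, hPmax, hPle⟩ := Ideal.exists_le_maximal _ hne
    have h₁ : ξp ∈ P := hPle (Ideal.mem_sup_left (Ideal.subset_span rfl))
    have h₂ : ξm ∈ P := hPle (Ideal.mem_sup_right (Ideal.subset_span rfl))
    have h2θ : 2*θR ∈ P := by
      have hs := P.sub_mem h₁ h₂
      have he : ξp - ξm = 2*θR := by rw [hξp, hξm]; ring
      rwa [he] at hs
    obtain ⟨uu, vv, huv⟩ := hy4D
    have hsq : ((4:R) * ((D:ℕ):R)) = -((2*θR) * (2*θR)) := by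
      apply hjinj
      simp only [map_neg, map_mul, hjθ, map_ofNat, map_natCast]
      linear_combination (4 : ℂ) * th_mul_self D
    have h4D : ((4:R) * ((D:ℕ):R)) ∈ P := by
      rw [hsq]; exact P.neg_mem (P.mul_mem_left _ h2θ)
    have hyP : ((y:ℤ):R) ∈ P := by
      have hpow : ((y:ℤ):R)^n ∈ P := by
        rw [← hynR]; exact P.mul_mem_right _ h₁
      exact hPmax.isPrime.mem_of_pow_mem _ hpow
    have h1P : (1:R) ∈ P := by
      have hmem : ((uu*y + vv*(4*(D:ℤ)) : ℤ):R) ∈ P := by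
        have e : ((uu*y + vv*(4*(D:ℤ)) : ℤ):R) = (uu:R) * ((y:ℤ):R) + (vv:R) * ((4:R) * ((D:ℕ):R)) := by
          apply hjinj
          simp only [map_add, map_mul, hjint, map_ofNat, map_natCast]
          push_cast; ring
        rw [e]
        exact P.add_mem (P.mul_mem_left _ hyP) (P.mul_mem_left _ h4D)
      rw [huv] at hmem
      simpa using hmem
    exact hPmax.ne_top (P.eq_top_of_isUnit_mem h1P isUnit_one)
  have hcid : IsCoprime Ip Im := (Ideal.isCoprime_iff_sup_eq).mpr hsup
  have hgcd : IsUnit (gcd Ip Im) := hcid.isUnit_of_dvd' (gcd_dvd_left _ _) (gcd_dvd_right _ _)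
  obtain ⟨A, hA⟩ := exists_eq_pow_of_mul_eq_pow hgcd hprod
  have hξp0 : ξp ≠ 0 := by
    intro h
    have hjz := congrArg j h
    rw [map_zero, hξp] at hjz
    simp only [map_add, hjθ, hjint] at hjz
    have him : Real.sqrt (D:ℝ) = 0 := by
      have h2 := congrArg Complex.im hjz
      rw [Complex.add_im, Complex.zero_im, th_im] at h2
      simpa using h2
    have hpos : (0:ℝ) < Real.sqrt (D:ℝ) := Real.sqrt_pos.mpr (by exact_mod_cast hDpos)
    exact absurd him (ne_of_gt hpos)
  have hIp0 : Ip ≠ 0 := by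
    rw [hIp, Ne, Ideal.zero_eq_bot, Ideal.span_singleton_eq_bot]; exact hξp0
  have hA0 : A ≠ 0 := by rintro rfl; rw [zero_pow (by omega)] at hA; exact hIp0 hA
  have hAmem : A ∈ (Ideal R)⁰ := mem_nonZeroDivisors_of_ne_zero hA0
  have hIpmem : Ip ∈ (Ideal R)⁰ := mem_nonZeroDivisors_of_ne_zero hIp0
  have hgn : ClassGroup.mk0 ⟨A, hAmem⟩ ^ n = 1 := by
    rw [← map_pow]
    have h2 : (⟨A, hAmem⟩ ^ n : (Ideal R)⁰) = ⟨Ip, hIpmem⟩ :=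
      Subtype.ext (by rw [SubmonoidClass.coe_pow]; exact hA.symm)
    rw [h2, ClassGroup.mk0_eq_one_iff]
    exact ⟨⟨ξp, hIp⟩⟩
  have hg1 : ClassGroup.mk0 ⟨A, hAmem⟩ = 1 := by
    have hd1 := orderOf_dvd_of_pow_eq_one hgn
    have hd2 := orderOf_dvd_natCard (ClassGroup.mk0 ⟨A, hAmem⟩)
    have hdg := Nat.dvd_gcd hd1 hd2
    rw [Nat.Coprime] at hcop'
    rw [hcop'] at hdg
    exact orderOf_eq_one_iff.mp (Nat.dvd_one.mp hdg)
  have hprinc : A.IsPrincipal := (ClassGroup.mk0_eq_one_iff hAmem).mp hg1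
  obtain ⟨α, hα⟩ := hprinc.1
  have hα' : A = Ideal.span {α} := hα
  have hspan : Ideal.span {ξp} = Ideal.span {α^n} := by
    rw [← hIp, hA, hα', Ideal.span_singleton_pow]
  have hassoc : Associated ξp (α^n) := by
    rw [← Ideal.span_singleton_eq_span_singleton]; exact hspan
  obtain ⟨u, hu⟩ := hassoc
  -- coordinates machinery
  have hjmem : ∀ t : R, j t ∈ ℚ⟮th D⟯ := fun t => SetLike.coe_mem ((algebraMap R K t))
  have hjintg : ∀ t : R, IsIntegral ℤ (j t) := fun t =>
    (isIntegral_algebraMap_iff (algebraMap K ℂ).injective).mpr t.isIntegral_coe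
  -- the Zsqrtd lifting
  have hsqd : th D * th D = ((-(D:ℤ) : ℤ) : ℂ) := by rw [th_mul_self]; push_cast; ring
  set f : ℤ√(-(D:ℤ)) →+* ℂ := Zsqrtd.lift ⟨th D, hsqd⟩ with hfdef
  have hf : ∀ a b : ℤ, f ⟨a,b⟩ = a + b * th D := fun a b => by
    simp [hfdef, Zsqrtd.lift_apply_apply]
  have hfinj : Function.Injective f := by
    apply Zsqrtd.lift_injective
    intro m hm
    have : (0:ℤ) < D := by exact_mod_cast hDpos
    nlinarith [mul_self_nonneg m]
  -- units of R are ±1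
  have hunit : (u : R) = 1 ∨ (u : R) = -1 := by
    obtain ⟨a1, b1, hab1⟩ := int_coords D hD hDmod (hjmem (u:R)) (hjintg _)
    obtain ⟨c1, d1, hcd1⟩ := int_coords D hD hDmod (hjmem ((u⁻¹:Rˣ):R)) (hjintg _)
    have hprod1 : (⟨a1,b1⟩ : ℤ√(-(D:ℤ))) * ⟨c1,d1⟩ = 1 := by
      apply hfinj
      rw [map_mul, map_one, hf, hf, ← hab1, ← hcd1, ← map_mul]
      rw [show ((u:R) * ((u⁻¹:Rˣ):R)) = 1 from by
        rw [← Units.val_mul, mul_inv_cancel, Units.val_one], map_one]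
    have hunitZ : IsUnit (⟨a1,b1⟩ : ℤ√(-(D:ℤ))) := IsUnit.of_mul_eq_one _ hprod1
    have hnorm := (Zsqrtd.norm_eq_one_iff' (by omega) _).mpr hunitZ
    rw [Zsqrtd.norm_def] at hnorm
    have hDZ : (2:ℤ) ≤ D := by exact_mod_cast hD2
    have hb1 : b1 = 0 := by nlinarith [mul_self_nonneg a1, mul_self_nonneg b1]
    have ha1 : a1 = 1 ∨ a1 = -1 := by
      have haa : a1 * a1 = 1 := by rw [hb1] at hnorm; simpa using hnorm
      rcases Int.isUnit_iff.mp (IsUnit.of_mul_eq_one a1 haa) with h | h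
      · exact Or.inl h
      · exact Or.inr h
    rcases ha1 with h | h
    · left
      apply hjinj
      rw [map_one, hab1, hb1, h]
      push_cast; ring
    · right
      apply hjinj
      rw [map_neg, map_one, hab1, hb1, h]
      push_cast; ring
  obtain ⟨β, hβ⟩ : ∃ β : R, ξp = β^n := by
    rcases hunit with h | h
    · exact ⟨α, by rw [← hu, h, mul_one]⟩
    · refine ⟨-α, ?_⟩
      rw [Odd.neg_pow hodd, ← hu, h]
      ring
  obtain ⟨a, b, hab⟩ := int_coords D hD hDmod (hjmem β) (hjintg β)
  have hjξp : j ξp = (x:ℂ) + th D := by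
    rw [hξp]; simp only [map_add, hjθ, hjint]
  have hZeq : (⟨x, 1⟩ : ℤ√(-(D:ℤ))) = (⟨a, b⟩ : ℤ√(-(D:ℤ)))^n := by
    apply hfinj
    rw [map_pow, hf, hf, ← hab, ← map_pow, ← hβ, hjξp]
    push_cast; ring
  obtain ⟨e, f', hef⟩ := zsq_pow D a b n
  have him : (1:ℤ) = (n:ℤ)*a^(n-1)*b + D*b*f' := congrArg Zsqrtd.im (hZeq.trans hef)
  have hbdvd : b ∣ 1 := ⟨(n:ℤ)*a^(n-1) + D*f', by linear_combination him⟩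
  rcases Int.isUnit_iff.mp (isUnit_of_dvd_one hbdvd) with hb | hb
  · refine (ha a).1 (Int.ModEq.symm (Int.modEq_iff_dvd.mpr ?_))
    rw [hb] at him
    exact ⟨-f', by linear_combination -him⟩
  · refine (ha a).2 (Int.ModEq.symm (Int.modEq_iff_dvd.mpr ?_))
    rw [hb] at him
    exact ⟨-f', by linear_combination him⟩
end

section
/- Let n > 1 be an odd integer, D a square-free positive integer, p a prime with p ≡ 3 (mod 4), and x an integer satisfying x² + D = pⁿ and x² < pⁿ/2. Then the ideal class group of the imaginary quadratic field ℚ(√−D) contains an element of order n. -/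
open IntermediateField NumberField Polynomial nonZeroDivisors

lemma aux_den (D : ℕ) (hD : Squarefree D) (q : ℚ) (t : ℤ) (ht : (D:ℚ) * q^2 = t) :
    ∃ b : ℤ, (b:ℚ) = q := by
  have h1 : (D:ℚ) * (q.num:ℚ)^2 = (t:ℚ) * (q.den:ℚ)^2 := by
    have hq : (q.num : ℚ) = q * q.den := (Rat.mul_den_eq_num q).symm
    rw [hq, mul_pow]
    calc (D:ℚ) * ((q:ℚ)^2 * (q.den:ℚ)^2) = ((D:ℚ) * q^2) * (q.den:ℚ)^2 := by ring
      _ = t * (q.den:ℚ)^2 := by rw [ht]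
  have h2 : (D:ℤ) * q.num^2 = t * (q.den:ℤ)^2 := by exact_mod_cast h1
  have hdvd : ((q.den:ℤ))^2 ∣ (D:ℤ) * q.num^2 := ⟨t, by rw [h2]; ring⟩
  have hcop : IsCoprime ((q.den:ℤ)) q.num := by
    rw [Int.isCoprime_iff_gcd_eq_one]
    simp only [Int.gcd, Int.natAbs_natCast]
    rw [Nat.gcd_comm]
    exact q.reduced
  have hdvdD : ((q.den:ℤ))^2 ∣ (D:ℤ) := (hcop.pow).dvd_of_dvd_mul_right hdvd
  have hnat : q.den^2 ∣ D := by exact_mod_cast hdvdD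
  have hunit : IsUnit q.den := hD q.den (by rwa [← pow_two])
  have hden1 : q.den = 1 := Nat.isUnit_iff.mp hunit
  refine ⟨q.num, ?_⟩
  rw [← Rat.num_div_den q, hden1]; simp

lemma aux_sq (p m : ℕ) (hp : p.Prime) (hm : Odd m) (t : ℕ) (ht : t ≠ 0) (h : t^2 = p^m) :
    False := by
  have h1 : (t^2).factorization p = (p^m).factorization p := by rw [h]
  rw [Nat.factorization_pow, hp.factorization_pow] at h1
  simp only [Finsupp.smul_apply, Finsupp.single_eq_same, smul_eq_mul] at h1
  have := Nat.odd_iff.mp hm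
  omega


set_option maxHeartbeats 4000000
set_option synthInstance.maxHeartbeats 400000

theorem stmt2 (n : ℕ) (hn : 1 < n) (hodd : Odd n)
    (D : ℕ) (hD : Squarefree D) (hDpos : 0 < D)
    (p : ℕ) (hp : p.Prime) (hpmod : p % 4 = 3)
    (x : ℤ) (hx : x ^ 2 + (D : ℤ) = (p : ℤ) ^ n)
    (hlt : 2 * x ^ 2 < (p : ℤ) ^ n) :
    ∃ c : ClassGroup (𝓞 ℚ⟮(Complex.I * Real.sqrt D : ℂ)⟯), orderOf c = n := by
  have hθ2 : (Complex.I * Real.sqrt D : ℂ) ^ 2 = -(D:ℂ) := by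
    rw [mul_pow, Complex.I_sq, ← Complex.ofReal_pow, Real.sq_sqrt (by positivity)]
    push_cast; ring
  set θ : ℂ := (Complex.I * Real.sqrt D : ℂ) with hθdef
  have hDQ : (0:ℚ) < D := by exact_mod_cast hDpos
  have hfirr : Irreducible (X ^ 2 - C (-(D:ℚ))) :=
    X_pow_sub_C_irreducible_of_prime Nat.prime_two (fun b => by nlinarith [sq_nonneg b])
  have hfeval : aeval θ (X ^ 2 - C (-(D:ℚ))) = 0 := by
    rw [map_sub, map_pow, aeval_X, aeval_C, hθ2]
    push_cast; ring
  have hint : IsIntegral ℚ θ :=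
    ⟨X ^ 2 - C (-(D:ℚ)), monic_X_pow_sub_C _ two_ne_zero, by
      simpa [Polynomial.eval₂_sub, Polynomial.aeval_def] using hfeval⟩
  have hmin : minpoly ℚ θ = X ^ 2 - C (-(D:ℚ)) :=
    (minpoly.eq_of_irreducible_of_monic hfirr hfeval (monic_X_pow_sub_C _ two_ne_zero)).symm
  set K := ℚ⟮θ⟯ with hKdef
  set g : K := AdjoinSimple.gen ℚ θ with hgdef
  haveI : FiniteDimensional ℚ K := IntermediateField.adjoin.finiteDimensional hint
  haveI : NumberField K := ⟨⟩
  have hcoe_g : (algebraMap K ℂ) g = θ := AdjoinSimple.algebraMap_gen ℚ θ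
  have hinj : Function.Injective (algebraMap K ℂ) := (algebraMap K ℂ).injective
  have hg2 : g ^ 2 = algebraMap ℚ K (-(D:ℚ)) := by
    apply hinj
    rw [map_pow, hcoe_g, hθ2, ← IsScalarTower.algebraMap_apply ℚ K ℂ]
    push_cast; ring
  set pb := IntermediateField.adjoin.powerBasis hint with hpbdef
  have hgen : pb.gen = g := rfl
  have hdim : pb.dim = 2 := by
    show (minpoly ℚ θ).natDegree = 2
    rw [hmin]
    compute_degree!
  set B : Module.Basis (Fin 2) ℚ K := pb.basis.reindex (finCongr hdim) with hBdef
  have hB0 : B 0 = 1 := by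
    rw [hBdef, Module.Basis.reindex_apply, pb.basis_eq_pow]
    simp
  have hB1 : B 1 = g := by
    rw [hBdef, Module.Basis.reindex_apply, pb.basis_eq_pow]
    simp [hgen]
  have hrepr0 : ∀ u v : ℚ, B.repr (u • (1:K) + v • g) 0 = u := by
    intro u v
    conv_lhs => rw [← hB0, ← hB1]
    rw [map_add, map_smul, map_smul, B.repr_self, B.repr_self]
    simp
  have hrepr1 : ∀ u v : ℚ, B.repr (u • (1:K) + v • g) 1 = v := by
    intro u v
    conv_lhs => rw [← hB0, ← hB1]
    rw [map_add, map_smul, map_smul, B.repr_self, B.repr_self]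
    simp
  have hgg : g * g = (-(D:ℚ)) • (1:K) := by
    rw [← pow_two, hg2, Algebra.algebraMap_eq_smul_one]
  have hmul : ∀ u v : ℚ, (u • (1:K) + v • g) * g = ((-(D:ℚ))*v) • (1:K) + u • g := by
    intro u v
    rw [add_mul, smul_mul_assoc u (1:K) g, one_mul, smul_mul_assoc v g g, hgg, smul_smul,
      mul_comm v, add_comm]
  have e00 : ∀ u v : ℚ, Algebra.leftMulMatrix B (u • (1:K) + v • g) 0 0 = u := by
    intro u v
    rw [Algebra.leftMulMatrix_eq_repr_mul, hB0, mul_one, hrepr0]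
  have e10 : ∀ u v : ℚ, Algebra.leftMulMatrix B (u • (1:K) + v • g) 1 0 = v := by
    intro u v
    rw [Algebra.leftMulMatrix_eq_repr_mul, hB0, mul_one, hrepr1]
  have e01 : ∀ u v : ℚ, Algebra.leftMulMatrix B (u • (1:K) + v • g) 0 1 = (-(D:ℚ))*v := by
    intro u v
    rw [Algebra.leftMulMatrix_eq_repr_mul, hB1, hmul, hrepr0]
  have e11 : ∀ u v : ℚ, Algebra.leftMulMatrix B (u • (1:K) + v • g) 1 1 = u := by
    intro u v
    rw [Algebra.leftMulMatrix_eq_repr_mul, hB1, hmul, hrepr1]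
  have hnorm : ∀ u v : ℚ, Algebra.norm ℚ (u • (1:K) + v • g) = u^2 + D*v^2 := by
    intro u v
    rw [Algebra.norm_eq_matrix_det B, Matrix.det_fin_two, e00, e01, e10, e11]
    ring
  have htrace : ∀ u v : ℚ, Algebra.trace ℚ K (u • (1:K) + v • g) = 2*u := by
    intro u v
    rw [Algebra.trace_eq_matrix_trace B, Matrix.trace_fin_two, e00, e11]
    ring
  have hcoords : ∀ y : K, ∃ u v : ℚ, y = u • (1:K) + v • g := by
    intro y
    refine ⟨B.repr y 0, B.repr y 1, ?_⟩
    have := B.sum_repr y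
    rw [Fin.sum_univ_two, hB0, hB1] at this
    exact this.symm
  -- ring of integers
  have hp3 : 3 ≤ p := by omega
  have hgO : IsIntegral ℤ g := by
    refine ⟨X ^ 2 - C (-(D:ℤ)), monic_X_pow_sub_C _ two_ne_zero, ?_⟩
    have : Polynomial.aeval g (X ^ 2 - C (-(D:ℤ))) = 0 := by
      rw [map_sub, map_pow, aeval_X, aeval_C, hg2]
      have : (algebraMap ℤ K) (-(D:ℤ)) = algebraMap ℚ K (-(D:ℚ)) := by
        push_cast
        simp
      rw [this]
      ring
    simpa [Polynomial.aeval_def] using this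
  set gO : 𝓞 K := ⟨g, hgO⟩ with hgOdef
  set αO : 𝓞 K := (x : 𝓞 K) + gO with hαOdef
  have hxcast : (algebraMap (𝓞 K) K) ((x : 𝓞 K)) = (x:ℚ) • (1:K) := by
    rw [map_intCast, ← Algebra.algebraMap_eq_smul_one, map_intCast]
  have hαK : algebraMap (𝓞 K) K αO = (x:ℚ) • (1:K) + (1:ℚ) • g := by
    rw [hαOdef, map_add, hxcast, one_smul]
    rfl
  -- the "half-integer coordinates" lemma
  have hhalf : ∀ (β : 𝓞 K) (u v : ℚ), algebraMap (𝓞 K) K β = u • (1:K) + v • g →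
      (∃ a : ℤ, (a:ℚ) = 2*u) ∧ (∃ b : ℤ, (b:ℚ) = 2*v) := by
    intro β u v hβ
    have hintβ : IsIntegral ℤ (algebraMap (𝓞 K) K β) := β.isIntegral_coe
    have htr : IsIntegral ℤ (Algebra.trace ℚ K (algebraMap (𝓞 K) K β)) :=
      Algebra.isIntegral_trace hintβ
    obtain ⟨a, ha⟩ := IsIntegrallyClosed.isIntegral_iff.mp htr
    have hno : IsIntegral ℤ (Algebra.norm ℚ (algebraMap (𝓞 K) K β)) :=
      Algebra.isIntegral_norm ℚ hintβ
    obtain ⟨N, hN⟩ := IsIntegrallyClosed.isIntegral_iff.mp hno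
    rw [hβ, htrace] at ha
    rw [hβ, hnorm] at hN
    have ha' : (a:ℚ) = 2*u := by exact_mod_cast ha
    refine ⟨⟨a, ha'⟩, ?_⟩
    have hNQ : (N:ℚ) = u^2 + D*v^2 := by exact_mod_cast hN
    have ht : (D:ℚ) * (2*v)^2 = ((4*N - a^2 : ℤ) : ℚ) := by
      push_cast
      linear_combination (-4 : ℚ) * hNQ + ((a:ℚ) + 2*u) * ha'
    exact aux_den D hD (2*v) (4*N - a^2) ht
  -- norm of αO
  have hNα : Algebra.norm ℤ αO = (p:ℤ)^n := by
    have h1 : ((Algebra.norm ℤ αO : ℤ) : ℚ) = Algebra.norm ℚ (algebraMap (𝓞 K) K αO) :=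
      Algebra.coe_norm_int αO
    rw [hαK, hnorm] at h1
    have h2 : ((Algebra.norm ℤ αO : ℤ) : ℚ) = (((p:ℤ)^n : ℤ) : ℚ) := by
      rw [h1, ← hx]; push_cast; ring
    exact_mod_cast h2
  have hNspanα : Ideal.absNorm (Ideal.span {αO}) = p ^ n := by
    rw [Ideal.absNorm_span_singleton, hNα]
    simp [Int.natAbs_pow]
  have hrank : Module.finrank ℚ K = 2 := by rw [pb.finrank, hdim]
  have hpOcast : (algebraMap (𝓞 K) K) ((p : ℕ) : 𝓞 K) = algebraMap ℚ K ((p:ℕ):ℚ) := by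
    rw [map_natCast, map_natCast]
  have hNp : Ideal.absNorm (Ideal.span {((p:ℕ) : 𝓞 K)}) = p ^ 2 := by
    rw [Ideal.absNorm_span_singleton]
    have h1 : ((Algebra.norm ℤ ((p:ℕ) : 𝓞 K) : ℤ) : ℚ) = (p:ℚ)^2 := by
      rw [Algebra.coe_norm_int, RingOfIntegers.coe_eq_algebraMap, hpOcast, Algebra.norm_algebraMap, hrank]
    have h2 : Algebra.norm ℤ ((p:ℕ) : 𝓞 K) = ((p^2 : ℕ) : ℤ) := by
      exact_mod_cast h1
    rw [h2]
    simp [Int.natAbs_pow]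
  -- p does not divide αO
  have hpndvd : ¬ (((p:ℕ) : 𝓞 K) ∣ αO) := by
    rintro ⟨γ, hγ⟩
    obtain ⟨u, v, huv⟩ := hcoords (algebraMap (𝓞 K) K γ)
    have hγK : algebraMap (𝓞 K) K αO = ((p:ℚ)*u) • (1:K) + ((p:ℚ)*v) • g := by
      rw [hγ, map_mul, hpOcast, huv, ← Algebra.smul_def, smul_add, smul_smul, smul_smul]
    have heq : (x:ℚ) • (1:K) + (1:ℚ) • g = ((p:ℚ)*u) • (1:K) + ((p:ℚ)*v) • g := by
      rw [← hαK, hγK]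
    have h1 : (1:ℚ) = (p:ℚ)*v := by
      have h := congrArg (fun z => B.repr z 1) heq
      simpa only [hrepr1] using h
    obtain ⟨b, hb⟩ := (hhalf γ u v huv).2
    have hpb : (p:ℚ) * (b:ℚ) = 2 := by
      linear_combination (p:ℚ) * hb - 2 * h1
    have hpb' : (p:ℤ) * b = 2 := by exact_mod_cast hpb
    have hdvd2 : (p:ℤ) ∣ 2 := ⟨b, hpb'.symm⟩
    have := Int.le_of_dvd (by norm_num) hdvd2
    have : (3:ℤ) ≤ (p:ℤ) := by exact_mod_cast hp3
    omega
  -- ideal theory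
  have hαO0 : αO ≠ 0 := by
    intro h0
    rw [h0, Algebra.norm_zero] at hNα
    have : (0:ℤ) < (p:ℤ)^n := by positivity
    omega
  set Iα : Ideal (𝓞 K) := Ideal.span {αO} with hIαdef
  have hαIα : αO ∈ Iα := Ideal.subset_span rfl
  have hpn1 : 1 < p ^ n := Nat.one_lt_pow (by omega) (by omega)
  have hIα_ne_top : Iα ≠ ⊤ := by
    intro h
    have h1 : Ideal.absNorm Iα = 1 := Ideal.absNorm_eq_one_iff.mpr h
    rw [hNspanα] at h1
    omega
  have hMp : ∀ M : Ideal (𝓞 K), M.IsMaximal → Iα ≤ M → ((p:ℕ) : 𝓞 K) ∈ M := by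
    intro M hMmax hMle
    have hdvdN : Ideal.absNorm M ∣ p ^ n := by
      rw [← hNspanα]
      exact Ideal.absNorm_dvd_absNorm_of_le hMle
    obtain ⟨k, hk, hMk⟩ := (Nat.dvd_prime_pow hp).mp hdvdN
    have hmem : ((Ideal.absNorm M : ℕ) : 𝓞 K) ∈ M := Ideal.absNorm_mem M
    rw [hMk] at hmem
    push_cast at hmem
    exact hMmax.isPrime.mem_of_pow_mem k hmem
  obtain ⟨M0, hM0max, hM0le⟩ := Ideal.exists_le_maximal Iα hIα_ne_top
  set A : Ideal (𝓞 K) := Ideal.span {((p:ℕ) : 𝓞 K), αO} with hAdef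
  have hpA : ((p:ℕ) : 𝓞 K) ∈ A := Ideal.subset_span (Set.mem_insert _ _)
  have hαA : αO ∈ A := Ideal.subset_span (Set.mem_insert_of_mem _ rfl)
  have hAle : A ≤ M0 := by
    rw [hAdef, Ideal.span_le]
    rintro y hy
    rcases hy with rfl | hy
    · exact hMp M0 hM0max hM0le
    · rw [Set.mem_singleton_iff] at hy
      subst hy
      exact hM0le hαIα
  have hAtop : A ≠ ⊤ := fun h => hM0max.ne_top (top_le_iff.mp (h ▸ hAle))
  have hAdvdp : A ∣ Ideal.span {((p:ℕ) : 𝓞 K)} :=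
    Ideal.dvd_iff_le.mpr (Ideal.span_le.mpr (by simpa using hpA))
  have hNA_dvd : Ideal.absNorm A ∣ p ^ 2 := by
    rw [← hNp]
    exact map_dvd _ hAdvdp
  obtain ⟨k, hk2, hNAk⟩ := (Nat.dvd_prime_pow hp).mp hNA_dvd
  have hk0 : k ≠ 0 := by
    intro h
    rw [h, pow_zero] at hNAk
    exact hAtop (Ideal.absNorm_eq_one_iff.mp hNAk)
  have hk2' : k ≠ 2 := by
    intro h
    obtain ⟨Cc, hC⟩ := hAdvdp
    have hCeq : p ^ 2 = p ^ 2 * Ideal.absNorm Cc := by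
      conv_lhs => rw [← hNp, hC]
      rw [map_mul, hNAk, h]
    have hp2 : 0 < p ^ 2 := by positivity
    have hC1 : Ideal.absNorm Cc = 1 := by
      have h1 : p ^ 2 * 1 = p ^ 2 * Ideal.absNorm Cc := by rw [mul_one]; exact hCeq
      exact (Nat.eq_of_mul_eq_mul_left hp2 h1).symm
    have hCtop : Cc = ⊤ := Ideal.absNorm_eq_one_iff.mp hC1
    rw [hCtop, Ideal.mul_top] at hC
    exact hpndvd (Ideal.mem_span_singleton.mp (hC ▸ hαA))
  have hk1 : k = 1 := by omega
  have hNA : Ideal.absNorm A = p := by rw [hNAk, hk1, pow_one]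
  have hAprime : A.IsPrime :=
    Ideal.isPrime_of_irreducible_absNorm
      (by rw [hNA]; exact (Nat.irreducible_iff_nat_prime _).mpr hp)
  have hAbot : A ≠ ⊥ := by
    intro h
    have := Ideal.absNorm_eq_zero_iff.mpr h
    omega
  have hAmax : A.IsMaximal := hAprime.isMaximal hAbot
  have huniq : ∀ M : Ideal (𝓞 K), M.IsMaximal → Iα ≤ M → M = A := by
    intro M hMmax hMle
    have hpM := hMp M hMmax hMle
    have hαM : αO ∈ M := hMle hαIα
    have hAM : A ≤ M := by
      rw [hAdef, Ideal.span_le]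
      rintro y hy
      rcases hy with rfl | hy
      · exact hpM
      · rw [Set.mem_singleton_iff] at hy
        subst hy
        exact hαM
    exact (hAmax.eq_of_le hMmax.ne_top hAM).symm
  -- unique factorization into powers of A
  have hNIα0 : Ideal.absNorm Iα ≠ 0 := by rw [hNspanα]; positivity
  have key : ∀ N : ℕ, ∀ I : Ideal (𝓞 K), Ideal.absNorm I = N → I ∣ Iα → ∃ k, I = A ^ k := by
    intro N
    induction N using Nat.strong_induction_on with
    | _ N ih =>
      intro I hIN hIdvd
      by_cases hItop : I = ⊤
      · exact ⟨0, by rw [hItop, pow_zero, Ideal.one_eq_top]⟩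
      · obtain ⟨M, hMmax, hMle⟩ := Ideal.exists_le_maximal I hItop
        have hMIα : Iα ≤ M := le_trans (Ideal.le_of_dvd hIdvd) hMle
        have hMA : M = A := huniq M hMmax hMIα
        have hAdvdI : A ∣ I := Ideal.dvd_iff_le.mpr (hMA ▸ hMle)
        obtain ⟨I', hI'⟩ := hAdvdI
        have hI'dvdI : I' ∣ I := ⟨A, by rw [hI', mul_comm]⟩
        have hI'dvd : I' ∣ Iα := dvd_trans hI'dvdI hIdvd
        have hIN0 : Ideal.absNorm I ≠ 0 := by
          intro h0
          obtain ⟨Cc, hCc⟩ := hIdvd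
          apply hNIα0
          rw [hCc, map_mul, h0, zero_mul]
        have hI'N0 : Ideal.absNorm I' ≠ 0 := by
          intro h0
          apply hIN0
          rw [hI', map_mul, h0, mul_zero]
        have hlt2 : Ideal.absNorm I' < N := by
          rw [← hIN, hI', map_mul, hNA]
          have h1 : 0 < Ideal.absNorm I' := Nat.pos_of_ne_zero hI'N0
          calc Ideal.absNorm I' = 1 * Ideal.absNorm I' := (one_mul _).symm
            _ < p * Ideal.absNorm I' := (Nat.mul_lt_mul_right h1).mpr hp.one_lt
        obtain ⟨k, hk⟩ := ih _ hlt2 I' rfl hI'dvd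
        exact ⟨k + 1, by rw [hI', hk, pow_succ, mul_comm]⟩
  obtain ⟨k, hkIα⟩ := key _ Iα rfl dvd_rfl
  have hkn : k = n := by
    have h1 : p ^ n = p ^ k := by
      rw [← hNspanα]
      conv_lhs => rw [hkIα]
      rw [map_pow, hNA]
    exact (Nat.pow_right_injective hp.two_le h1.symm)
  rw [hkn] at hkIα
  -- the class group element
  have hAnz : A ∈ (Ideal (𝓞 K))⁰ :=
    Ideal.absNorm_ne_zero_iff_mem_nonZeroDivisors.mp (by rw [hNA]; exact hp.pos.ne')
  refine ⟨ClassGroup.mk0 ⟨A, hAnz⟩, ?_⟩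
  have hpow : ∀ l : ℕ, ∃ h, (⟨A, hAnz⟩ : (Ideal (𝓞 K))⁰) ^ l = ⟨A ^ l, h⟩ := by
    intro l
    refine ⟨?_, ?_⟩
    · exact pow_mem hAnz l
    · ext
      simp
  have hprinc_iff : ∀ l : ℕ, (ClassGroup.mk0 ⟨A, hAnz⟩) ^ l = 1 ↔ (A ^ l).IsPrincipal := by
    intro l
    obtain ⟨h, hpl⟩ := hpow l
    rw [← map_pow, hpl, ClassGroup.mk0_eq_one_iff]
  have hcn : (ClassGroup.mk0 ⟨A, hAnz⟩) ^ n = 1 := by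
    rw [hprinc_iff]
    rw [← hkIα]
    exact ⟨⟨αO, rfl⟩⟩
  have hmdvd : orderOf (ClassGroup.mk0 ⟨A, hAnz⟩) ∣ n := orderOf_dvd_of_pow_eq_one hcn
  set m := orderOf (ClassGroup.mk0 ⟨A, hAnz⟩) with hmdef
  have hm0 : m ≠ 0 := by
    intro h0
    rw [h0] at hmdvd
    have := zero_dvd_iff.mp hmdvd
    omega
  by_contra hne
  have hmlt : m < n := lt_of_le_of_ne (Nat.le_of_dvd (by omega) hmdvd) hne
  have hmodd : Odd m := by
    rcases Nat.even_or_odd m with he | ho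
    · exfalso
      have h2n : 2 ∣ n := dvd_trans he.two_dvd hmdvd
      have := Nat.odd_iff.mp hodd
      omega
    · exact ho
  have hcm : (ClassGroup.mk0 ⟨A, hAnz⟩) ^ m = 1 := pow_orderOf_eq_one _
  obtain ⟨⟨β, hβ⟩⟩ := (hprinc_iff m).mp hcm
  have hβ' : A ^ m = Ideal.span {β} := hβ
  -- hβ : A ^ m = span {β}
  have hNβ : (Algebra.norm ℤ β).natAbs = p ^ m := by
    rw [← Ideal.absNorm_span_singleton, ← hβ', map_pow, hNA]
  obtain ⟨u, v, huv⟩ := hcoords (algebraMap (𝓞 K) K β)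
  obtain ⟨⟨a, ha⟩, ⟨b, hb⟩⟩ := hhalf β u v huv
  have hNeqQ : ((Algebra.norm ℤ β : ℤ) : ℚ) = u^2 + D*v^2 := by
    rw [Algebra.coe_norm_int, RingOfIntegers.coe_eq_algebraMap, huv, hnorm]
  have hNnonneg : (0:ℚ) ≤ ((Algebra.norm ℤ β : ℤ) : ℚ) := by
    rw [hNeqQ]
    positivity
  have hNval : ((Algebra.norm ℤ β : ℤ) : ℚ) = (p:ℚ)^m := by
    have h0 : (0:ℤ) ≤ Algebra.norm ℤ β := by exact_mod_cast hNnonneg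
    have h2 : Algebra.norm ℤ β = ((Algebra.norm ℤ β).natAbs : ℤ) := (Int.natAbs_of_nonneg h0).symm
    have h3 : Algebra.norm ℤ β = ((p:ℤ))^m := by
      rw [h2, hNβ]; push_cast; ring
    rw [h3]; push_cast; ring
  have hpm : (p:ℚ)^m = u^2 + D*v^2 := by rw [← hNval, hNeqQ]
  have h4 : 4 * (p:ℤ)^m = a^2 + D*b^2 := by
    have h4Q : 4 * (p:ℚ)^m = (a:ℚ)^2 + D*(b:ℚ)^2 := by
      rw [ha, hb]
      linear_combination (4:ℚ) * hpm
    exact_mod_cast h4Q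
  by_cases hb0 : b = 0
  · -- β is rational : a^2 = 4 p^m with m odd, impossible
    rw [hb0] at h4
    ring_nf at h4
    have ha4 : a^2 = 4*(p:ℤ)^m := by linarith only [h4]
    have habs : ((a.natAbs:ℤ))^2 = 4*(p:ℤ)^m := by
      rw [← Int.abs_eq_natAbs, sq_abs]
      exact ha4
    have hAnat : a.natAbs^2 = 4*p^m := by exact_mod_cast habs
    have heven : Even (a.natAbs) := by
      have h2 : Even (a.natAbs^2) := by
        rw [hAnat]
        exact ⟨2*p^m, by ring⟩
      exact (Nat.even_pow.mp h2).1
    obtain ⟨t, ht2⟩ := heven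
    have ht' : 4*t^2 = 4*p^m := by
      rw [← hAnat, ht2]; ring
    have htpm : t^2 = p^m := by omega
    have ht0 : t ≠ 0 := by
      intro h0
      rw [h0] at htpm
      have hppos : 0 < p^m := pow_pos hp.pos m
      omega
    exact aux_sq p m hp hmodd t ht0 htpm
  · -- β is irrational : norm too large
    have h1b : 1 ≤ |b| := Int.one_le_abs hb0
    have hb1 : (1:ℤ) ≤ b^2 := by
      calc (1:ℤ) = 1^2 := by norm_num
        _ ≤ |b|^2 := pow_le_pow_left₀ (by norm_num) h1b 2
        _ = b^2 := sq_abs b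
    have hDZ : (0:ℤ) ≤ (D:ℤ) := by positivity
    have hDb : (0:ℤ) ≤ (D:ℤ)*(b^2-1) := mul_nonneg hDZ (by linarith only [hb1])
    have hD4 : (D:ℤ) ≤ 4*(p:ℤ)^m := by linarith only [h4, sq_nonneg a, hDb]
    have h2D : (p:ℤ)^n < 2*(D:ℤ) := by linarith only [hx, hlt]
    obtain ⟨t, ht⟩ := hmdvd
    have htodd : Odd t := by
      rcases Nat.even_or_odd t with he | ho
      · exfalso
        have : Even n := by rw [ht]; exact he.mul_left m
        have h2 := Nat.even_iff.mp this
        have h3 := Nat.odd_iff.mp hodd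
        omega
      · exact ho
    have ht1 : t ≠ 1 := by
      intro h1
      rw [h1, mul_one] at ht
      exact hne ht.symm
    have ht3 : 3 ≤ t := by
      have := Nat.odd_iff.mp htodd
      omega
    have h3m : 3*m ≤ n := by
      calc 3*m = m*3 := by ring
        _ ≤ m*t := Nat.mul_le_mul_left m ht3
        _ = n := ht.symm
    have hp1 : (1:ℤ) ≤ (p:ℤ) := by exact_mod_cast hp.one_lt.le
    have hp3' : (3:ℤ) ≤ (p:ℤ) := by exact_mod_cast hp3
    have hq3 : (3:ℤ) ≤ (p:ℤ)^m := by
      have := le_self_pow₀ hp1 hm0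
      linarith only [this, hp3']
    have hq : (p:ℤ)^(3*m) ≤ (p:ℤ)^n := pow_le_pow_right₀ hp1 h3m
    have h9 : 9*(p:ℤ)^m ≤ (p:ℤ)^(3*m) := by
      have he3 : (p:ℤ)^(3*m) = ((p:ℤ)^m)^3 := by rw [← pow_mul, mul_comm]
      rw [he3]
      have hq0 : (0:ℤ) ≤ (p:ℤ)^m := by linarith only [hq3]
      have hq2 : (9:ℤ) ≤ ((p:ℤ)^m)^2 := by
        have h33 := mul_le_mul hq3 hq3 (by norm_num) hq0
        calc (9:ℤ) = 3*3 := by norm_num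
          _ ≤ (p:ℤ)^m * ((p:ℤ)^m) := h33
          _ = ((p:ℤ)^m)^2 := (sq ((p:ℤ)^m)).symm
      calc 9*(p:ℤ)^m ≤ ((p:ℤ)^m)^2 * ((p:ℤ)^m) := mul_le_mul_of_nonneg_right hq2 hq0
        _ = ((p:ℤ)^m)^3 := (pow_succ ((p:ℤ)^m) 2).symm
    linarith only [hD4, h2D, hq, h9, hq3]
end

section
/- Let D be a positive integer, n > 1 an odd integer, and a, b, x integers such that x + √−D = (a + b√−D)ⁿ in the ring ℤ[√−D]. Then b = 1 or b = −1, and n·a^(n−1) ≡ 1 (mod D) or n·a^(n−1) ≡ −1 (mod D). -/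
theorem stmt8 (D : ℕ) (hDpos : 0 < D) (n : ℕ) (hn : 1 < n) (hodd : Odd n)
    (a b x : ℤ)
    (h : (⟨x, 1⟩ : ℤ√(-(D : ℤ))) = (⟨a, b⟩ : ℤ√(-(D : ℤ))) ^ n) :
    (b = 1 ∨ b = -1) ∧
      ((n : ℤ) * a ^ (n - 1) ≡ 1 [ZMOD (D : ℤ)] ∨
        (n : ℤ) * a ^ (n - 1) ≡ -1 [ZMOD (D : ℤ)]) := by
  set z : ℤ√(-(D : ℤ)) := ⟨a, b⟩ with hz
  -- b divides the imaginary part of every power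
  have hdvd : ∀ m : ℕ, b ∣ (z ^ m).im := by
    intro m
    induction m with
    | zero => simp
    | succ k ih =>
      rw [pow_succ, Zsqrtd.im_mul]
      exact dvd_add (dvd_mul_left b _) (ih.mul_right _)
  -- real parts mod D
  have hre : ∀ m : ℕ, (z ^ m).re ≡ a ^ m [ZMOD (D : ℤ)] := by
    intro m
    induction m with
    | zero => simp
    | succ k ih =>
      rw [pow_succ, Zsqrtd.re_mul]
      have h0 : (-(D : ℤ)) * (z ^ k).im * z.im ≡ 0 [ZMOD (D : ℤ)] :=
        (Int.modEq_zero_iff_dvd).mpr ⟨-((z ^ k).im * z.im), by ring⟩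
      calc (z ^ k).re * z.re + (-(D : ℤ)) * (z ^ k).im * z.im
          ≡ a ^ k * a + 0 [ZMOD (D : ℤ)] := (ih.mul_right _).add h0
        _ = a ^ (k + 1) := by ring
  -- imaginary parts mod D
  have him : ∀ m : ℕ, 1 ≤ m → (z ^ m).im ≡ (m : ℤ) * a ^ (m - 1) * b [ZMOD (D : ℤ)] := by
    intro m hm
    induction m, hm using Nat.le_induction with
    | base => simp; exact Int.ModEq.refl _
    | succ k hk ih =>
      rw [pow_succ, Zsqrtd.im_mul]
      have : z.im = b := rfl
      have hre' : z.re = a := rfl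
      rw [this, hre']
      have hk1 : k - 1 + 1 = k := Nat.sub_add_cancel hk
      calc (z ^ k).re * b + (z ^ k).im * a
          ≡ a ^ k * b + ((k : ℤ) * a ^ (k - 1) * b) * a [ZMOD (D : ℤ)] :=
            ((hre k).mul_right _).add (ih.mul_right _)
        _ = a ^ k * b + (k : ℤ) * (a ^ (k - 1) * a) * b := by ring
        _ = ((k + 1 : ℕ) : ℤ) * a ^ ((k + 1) - 1) * b := by
            rw [← pow_succ, hk1]; push_cast; ring
  have h1 : (z ^ n).im = 1 := by rw [← h]
  have hb : b = 1 ∨ b = -1 := by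
    have : b ∣ 1 := h1 ▸ hdvd n
    exact Int.isUnit_iff.mp (isUnit_of_dvd_one this)
  have hmod : (1 : ℤ) ≡ (n : ℤ) * a ^ (n - 1) * b [ZMOD (D : ℤ)] := h1 ▸ him n hn.le
  refine ⟨hb, ?_⟩
  rcases hb with rfl | rfl
  · left; simpa using hmod.symm
  · right
    have := hmod.symm.neg
    simpa using this
end
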